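/- Let F be a field, t a natural number, and N₀ ⊆ F with |N₀| = t+1. Suppose {f_i}_{i∈N₀} are univariate degree-≤t polynomials with f_i(j) = f_j(i) for all i,j ∈ N₀, and let f₀ be the bivariate Lagrange interpolation polynomial defined by f₀(x,y) = Σ_{i,j∈N₀} f_i(j)·∏_{k∈N₀,k≠i}(x−k)/(i−k)·∏_{k∈N₀,k≠j}(y−k)/(j−k). Then f₀ is symmetric and for every i ∈ N₀ (indeed every i for which f_i(j)=f₀(j,i) holds for all j∈N₀), the univariate polynomial y ↦ f₀(i,y) equals f_i. -/

import Mathlib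

open MvPolynomial Polynomial

private lemma eval_aeval_CX {F : Type*} [CommRing F] (p : MvPolynomial (Fin 2) F) (x y : F) :
    Polynomial.eval y (MvPolynomial.aeval ![Polynomial.C x, Polynomial.X] p)
      = MvPolynomial.eval ![x, y] p := by
  induction p using MvPolynomial.induction_on with
  | C a => simp
  | add p q hp hq => simp [hp, hq]
  | mul_X p n hp => fin_cases n <;> simp [hp]

theorem stmt_2 (F : Type*) [Field F] [DecidableEq F] (t : ℕ) (N₀ : Finset F)
    (hN₀ : N₀.card = t + 1)
    (f : F → Polynomial F)
    (hdeg : ∀ i, (f i).natDegree ≤ t)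
    (hsym : ∀ i ∈ N₀, ∀ j ∈ N₀, (f i).eval j = (f j).eval i)
    (f₀ : MvPolynomial (Fin 2) F)
    (hf₀ : f₀ = ∑ i ∈ N₀, ∑ j ∈ N₀,
      MvPolynomial.C ((f i).eval j
          * (∏ k ∈ N₀.erase i, (i - k))⁻¹ * (∏ k ∈ N₀.erase j, (j - k))⁻¹)
        * (∏ k ∈ N₀.erase i, (MvPolynomial.X 0 - MvPolynomial.C k))
        * (∏ k ∈ N₀.erase j, (MvPolynomial.X 1 - MvPolynomial.C k))) :
    MvPolynomial.rename (Equiv.swap (0 : Fin 2) 1) f₀ = f₀ ∧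
    (∀ i ∈ N₀, MvPolynomial.aeval ![Polynomial.C i, Polynomial.X] f₀ = f i) ∧
    (∀ i : F, (∀ j ∈ N₀, (f i).eval j = MvPolynomial.eval ![j, i] f₀) →
      MvPolynomial.aeval ![Polynomial.C i, Polynomial.X] f₀ = f i) := by
  -- symmetry of f₀
  have hswap : MvPolynomial.rename (Equiv.swap (0 : Fin 2) 1) f₀ = f₀ := by
    rw [hf₀]
    simp only [map_sum, map_mul, map_prod, map_sub, rename_C, rename_X,
      Equiv.swap_apply_left, Equiv.swap_apply_right]
    rw [Finset.sum_comm]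
    refine Finset.sum_congr rfl fun i hi => Finset.sum_congr rfl fun j hj => ?_
    rw [hsym j hj i hi]
    ring
  -- evaluation at grid points
  have hgrid : ∀ a ∈ N₀, ∀ b ∈ N₀, MvPolynomial.eval ![a, b] f₀ = (f a).eval b := by
    intro a ha b hb
    have key : ∀ c ∈ N₀, ∀ i ∈ N₀,
        (∏ k ∈ N₀.erase i, (i - k))⁻¹ * (∏ k ∈ N₀.erase i, (c - k))
          = if i = c then 1 else 0 := by
      intro c hc i hi
      by_cases h : i = c
      · subst h
        simp only [if_pos rfl]
        have hne : (∏ k ∈ N₀.erase i, (i - k)) ≠ 0 :=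
          Finset.prod_ne_zero_iff.2 fun k hk => sub_ne_zero.2 (Ne.symm (Finset.mem_erase.1 hk).1)
        exact inv_mul_cancel₀ hne
      · rw [if_neg h, Finset.prod_eq_zero (Finset.mem_erase.2 ⟨fun hcc => h hcc.symm, hc⟩)
          (sub_self c), mul_zero]
    rw [hf₀]
    simp only [map_sum, map_mul, map_prod, MvPolynomial.eval_C, MvPolynomial.eval_X, map_sub,
      Matrix.cons_val_zero, Matrix.cons_val_one, Matrix.head_cons]
    rw [Finset.sum_eq_single a]
    · rw [Finset.sum_eq_single b]
      · have h1 := key a ha a ha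
        have h2 := key b hb b hb
        rw [if_pos rfl] at h1 h2
        calc (f a).eval b * (∏ k ∈ N₀.erase a, (a - k))⁻¹ * (∏ k ∈ N₀.erase b, (b - k))⁻¹
              * (∏ k ∈ N₀.erase a, (a - k)) * (∏ k ∈ N₀.erase b, (b - k))
            = (f a).eval b * ((∏ k ∈ N₀.erase a, (a - k))⁻¹ * (∏ k ∈ N₀.erase a, (a - k)))
              * ((∏ k ∈ N₀.erase b, (b - k))⁻¹ * (∏ k ∈ N₀.erase b, (b - k))) := by ring
          _ = (f a).eval b := by rw [h1, h2]; ring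
      · intro j hj hjb
        have hz := key b hb j hj
        rw [if_neg hjb] at hz
        calc (f a).eval j * (∏ k ∈ N₀.erase a, (a - k))⁻¹ * (∏ k ∈ N₀.erase j, (j - k))⁻¹
              * (∏ k ∈ N₀.erase a, (a - k)) * (∏ k ∈ N₀.erase j, (b - k))
            = (f a).eval j * ((∏ k ∈ N₀.erase a, (a - k))⁻¹ * (∏ k ∈ N₀.erase a, (a - k)))
              * ((∏ k ∈ N₀.erase j, (j - k))⁻¹ * (∏ k ∈ N₀.erase j, (b - k))) := by ring
          _ = 0 := by rw [hz]; ring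
      · exact fun h => absurd hb h
    · intro i hi hia
      have hz := key a ha i hi
      rw [if_neg hia] at hz
      apply Finset.sum_eq_zero
      intro j hj
      calc (f i).eval j * (∏ k ∈ N₀.erase i, (i - k))⁻¹ * (∏ k ∈ N₀.erase j, (j - k))⁻¹
            * (∏ k ∈ N₀.erase i, (a - k)) * (∏ k ∈ N₀.erase j, (b - k))
          = (f i).eval j * ((∏ k ∈ N₀.erase i, (i - k))⁻¹ * (∏ k ∈ N₀.erase i, (a - k)))
            * ((∏ k ∈ N₀.erase j, (j - k))⁻¹ * (∏ k ∈ N₀.erase j, (b - k))) := by ring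
        _ = 0 := by rw [hz]; ring
    · exact fun h => absurd ha h
  -- symmetry of evaluations
  have hevsym : ∀ a b : F, MvPolynomial.eval ![a, b] f₀ = MvPolynomial.eval ![b, a] f₀ := by
    intro a b
    conv_lhs => rw [← hswap]
    rw [MvPolynomial.eval_rename]
    have hc : ![a, b] ∘ ⇑(Equiv.swap (0 : Fin 2) 1) = ![b, a] := by
      funext n; fin_cases n <;> simp
    rw [hc]
  -- degree bound on univariate slices
  have hdegslice : ∀ i : F,
      (MvPolynomial.aeval ![Polynomial.C i, Polynomial.X] f₀ : Polynomial F).natDegree ≤ t := by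
    intro i
    rw [hf₀]
    simp only [map_sum, map_mul, map_prod, map_sub, MvPolynomial.aeval_C, MvPolynomial.aeval_X,
      Matrix.cons_val_zero, Matrix.cons_val_one, Matrix.head_cons, Polynomial.algebraMap_eq]
    refine Polynomial.natDegree_sum_le_of_forall_le _ _ fun a ha =>
      Polynomial.natDegree_sum_le_of_forall_le _ _ fun b hb => ?_
    refine le_trans Polynomial.natDegree_mul_le ?_
    refine le_trans (Nat.add_le_add_right Polynomial.natDegree_mul_le _) ?_
    have h1 : (Polynomial.C ((f a).eval b) * Polynomial.C (∏ k ∈ N₀.erase a, (a - k))⁻¹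
        * Polynomial.C (∏ k ∈ N₀.erase b, (b - k))⁻¹).natDegree ≤ 0 := by
      refine le_trans Polynomial.natDegree_mul_le ?_
      refine le_trans (Nat.add_le_add_right Polynomial.natDegree_mul_le _) ?_
      simp [Polynomial.natDegree_C]
    have h2 : (∏ k ∈ N₀.erase a, (Polynomial.C i - Polynomial.C k) : Polynomial F).natDegree ≤ 0 :=
      le_trans (Polynomial.natDegree_prod_le _ _) (le_of_eq (Finset.sum_eq_zero fun k _ => by
        rw [← Polynomial.C_sub, Polynomial.natDegree_C]))
    have h3 : (∏ k ∈ N₀.erase b, (Polynomial.X - Polynomial.C k) : Polynomial F).natDegree ≤ t := by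
      refine le_trans (Polynomial.natDegree_prod_le _ _) ?_
      simp only [Polynomial.natDegree_X_sub_C, Finset.sum_const, smul_eq_mul, mul_one]
      rw [Finset.card_erase_of_mem hb, hN₀]
      omega
    omega
  -- the general slice lemma (part 3)
  have part3 : ∀ i : F, (∀ j ∈ N₀, (f i).eval j = MvPolynomial.eval ![j, i] f₀) →
      MvPolynomial.aeval ![Polynomial.C i, Polynomial.X] f₀ = f i := by
    intro i h
    refine Polynomial.eq_of_degrees_lt_of_eval_finset_eq N₀ ?_ ?_ ?_
    · refine lt_of_le_of_lt Polynomial.degree_le_natDegree ?_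
      rw [hN₀]
      exact_mod_cast Nat.lt_succ_of_le (hdegslice i)
    · refine lt_of_le_of_lt Polynomial.degree_le_natDegree ?_
      rw [hN₀]
      exact_mod_cast Nat.lt_succ_of_le (hdeg i)
    · intro x hx
      rw [eval_aeval_CX, hevsym i x, ← h x hx]
  refine ⟨hswap, ?_, part3⟩
  intro i hi
  exact part3 i fun j hj => by rw [hsym i hi j hj, hgrid j hj i hi]
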